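/- For every face F of the reduced no broken circuit complex of a simple matroid M of rank r+1 and every total order ≺ on the ground set, the set L(F) defined by i ∈ L(F) iff i ∈ F or rk(i↑ ∪ F) > rk((i↑ \ {i}) ∪ F) (where i↑ = {j : i ≺ j}) is a basis of M containing F; moreover it is the ≺-lexicographically maximal basis containing F. -/

import Mathlib

open Set

/-- A circuit of a matroid: a minimal dependent set. -/
def Matroid.IsCircuit' {α : Type*} (M : Matroid α) (C : Set α) : Prop :=
  M.Dep C ∧ ∀ D ⊂ C, M.Indep D

/-- A broken circuit: a circuit with its least element (in the natural order) removed. -/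
def Matroid.IsBrokenCircuit {n : ℕ} (M : Matroid (Fin (n + 1))) (B : Set (Fin (n + 1))) : Prop :=
  ∃ C m, M.IsCircuit' C ∧ m ∈ C ∧ (∀ k ∈ C, m ≤ k) ∧ B = C \ {m}

/-- The rank of a set in a matroid: the largest size of an independent subset. -/
noncomputable def Matroid.rk' {α : Type*} (M : Matroid α) (S : Set α) : ℕ :=
  sSup {k | ∃ I, I ⊆ S ∧ M.Indep I ∧ I.ncard = k}

/-- A face of the reduced no broken circuit complex: a subset of `{1,…,n}` containing
no broken circuit (such a set is automatically independent). -/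
def RNBCface {n : ℕ} (M : Matroid (Fin (n + 1))) (F : Set (Fin (n + 1))) : Prop :=
  (0 : Fin (n + 1)) ∉ F ∧ (∀ B, M.IsBrokenCircuit B → ¬ B ⊆ F) ∧ M.Indep F

/-- The up-set `i↑` of `i` with respect to a second linear order `≺` (including `i` itself). -/
def upSet {n : ℕ} (prec : LinearOrder (Fin (n + 1))) (i : Fin (n + 1)) : Set (Fin (n + 1)) :=
  {j | prec.le i j}

/-- `L(F)`: the candidate `≺`-lexicographically maximal basis containing `F`, defined by
`i ∈ L(F)` iff `i ∈ F` or `rk(i↑ ∪ F) > rk((i↑ \ {i}) ∪ F)`. -/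
noncomputable def LSet {n : ℕ} (M : Matroid (Fin (n + 1))) (prec : LinearOrder (Fin (n + 1)))
    (F : Set (Fin (n + 1))) : Set (Fin (n + 1)) :=
  {i | i ∈ F ∨ M.rk' (upSet prec i ∪ F) > M.rk' ((upSet prec i \ {i}) ∪ F)}

/-- The facet `F̄` of the extended no broken circuit complex attached to a face `F` of the
reduced no broken circuit complex:  `{y_i : i ∈ F} ∪ {x_j : j ∈ L(F) \ F} ∪ {y_0}`,
with `x`-vertices encoded by `Sum.inl` and `y`-vertices by `Sum.inr`. -/
noncomputable def barFace {n : ℕ} (M : Matroid (Fin (n + 1))) (prec : LinearOrder (Fin (n + 1)))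
    (F : Set (Fin (n + 1))) : Set (Fin (n + 1) ⊕ Fin (n + 1)) :=
  (Sum.inr '' F) ∪ (Sum.inl '' (LSet M prec F \ F)) ∪ {Sum.inr 0}

/-- A face of the extended no broken circuit complex `Δ^ENBC_{M,≺}`: a subset of some
facet `F̄`. -/
noncomputable def ENBCface {n : ℕ} (M : Matroid (Fin (n + 1))) (prec : LinearOrder (Fin (n + 1)))
    (G : Set (Fin (n + 1) ⊕ Fin (n + 1))) : Prop :=
  ∃ F, RNBCface M F ∧ G ⊆ barFace M prec F


section Helpers

variable {β : Type*}

lemma plt_of_ple_of_ne (prec : LinearOrder β) {a b : β} (h : prec.le a b) (hne : a ≠ b) :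
    prec.lt a b := by
  letI := prec; exact lt_of_le_of_ne h hne

lemma plt_of_ple_of_plt (prec : LinearOrder β) {a b c : β} (h : prec.le a b) (h2 : prec.lt b c) :
    prec.lt a c := by
  letI := prec; exact lt_of_le_of_lt h h2

lemma plt_trans' (prec : LinearOrder β) {a b c : β} (h : prec.lt a b) (h2 : prec.lt b c) :
    prec.lt a c := by
  letI := prec; exact lt_trans h h2

lemma pnot_lt_of_le (prec : LinearOrder β) {a b : β} (h : prec.le a b) : ¬ prec.lt b a := by
  letI := prec; exact not_lt_of_ge h

lemma plt_irrefl' (prec : LinearOrder β) (a : β) : ¬ prec.lt a a := by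
  letI := prec; exact lt_irrefl a

lemma pne_of_lt' (prec : LinearOrder β) {a b : β} (h : prec.lt a b) : a ≠ b := by
  letI := prec; exact ne_of_lt h

lemma ple_of_lt' (prec : LinearOrder β) {a b : β} (h : prec.lt a b) : prec.le a b := by
  letI := prec; exact le_of_lt h

lemma pexists_min (prec : LinearOrder β) {S : Set β} (hfin : S.Finite) (hne : S.Nonempty) :
    ∃ a ∈ S, ∀ b ∈ S, prec.le a b := by
  letI := prec
  simpa using Set.exists_min_image S id hfin hne

lemma pexists_max (prec : LinearOrder β) {S : Set β} (hfin : S.Finite) (hne : S.Nonempty) :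
    ∃ a ∈ S, ∀ b ∈ S, prec.le b a := by
  letI := prec
  simpa using Set.exists_max_image S id hfin hne

variable {n : ℕ} {M : Matroid (Fin (n + 1))}

lemma rk'_eq_ncard {X I : Set (Fin (n + 1))} (hI : M.IsBasis' I X) : M.rk' X = I.ncard := by
  have hbdd : ∀ k ∈ {k | ∃ J, J ⊆ X ∧ M.Indep J ∧ J.ncard = k}, k ≤ I.ncard := by
    rintro k ⟨J, hJX, hJ, rfl⟩
    obtain ⟨J', hJ', hJJ'⟩ := hJ.subset_isBasis'_of_subset hJX
    calc J.ncard ≤ J'.ncard := Set.ncard_le_ncard hJJ' J'.toFinite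
    _ = I.ncard := by rw [Set.ncard_def, Set.ncard_def, hJ'.encard_eq_encard hI]
  exact le_antisymm (csSup_le ⟨0, ∅, empty_subset _, M.empty_indep, by simp⟩ hbdd)
    (le_csSup ⟨I.ncard, hbdd⟩ ⟨I, hI.subset, hI.indep, rfl⟩)

lemma rk'_lt_insert_iff (hE : M.E = Set.univ) {X : Set (Fin (n + 1))} {i : Fin (n + 1)}
    (hiX : i ∉ X) : M.rk' X < M.rk' (insert i X) ↔ i ∉ M.closure X := by
  obtain ⟨I, hI⟩ := M.exists_isBasis' X
  have hclI : M.closure I = M.closure X := hI.closure_eq_closure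
  constructor
  · intro hlt hicl
    have hb : M.IsBasis I (insert i X) := by
      refine hI.indep.isBasis_of_subset_of_subset_closure (hI.subset.trans (subset_insert _ _)) ?_
      rw [hclI]
      exact insert_subset hicl (M.subset_closure X (by rw [hE]; exact subset_univ _))
    rw [rk'_eq_ncard hI, rk'_eq_ncard hb.isBasis'] at hlt
    exact lt_irrefl _ hlt
  · intro hicl
    have hiI : i ∉ I := fun h => hiX (hI.subset h)
    have hins : M.Indep (insert i I) := by
      rw [hI.indep.insert_indep_iff_of_notMem hiI, hclI, hE]
      exact ⟨mem_univ _, hicl⟩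
    have hmem : I.ncard + 1 ∈ {k | ∃ J, J ⊆ insert i X ∧ M.Indep J ∧ J.ncard = k} :=
      ⟨insert i I, insert_subset_insert hI.subset, hins,
        Set.ncard_insert_of_notMem hiI I.toFinite⟩
    have hbdd : BddAbove {k | ∃ J, J ⊆ insert i X ∧ M.Indep J ∧ J.ncard = k} := by
      refine ⟨n + 1, ?_⟩
      rintro k ⟨J, hJ, _, rfl⟩
      calc J.ncard ≤ (Set.univ : Set (Fin (n + 1))).ncard :=
            Set.ncard_le_ncard (subset_univ J) finite_univ
      _ = n + 1 := by simp [Set.ncard_univ]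
    have h1 : I.ncard + 1 ≤ M.rk' (insert i X) := le_csSup hbdd hmem
    rw [rk'_eq_ncard hI]
    omega

lemma mem_LSet_iff {prec : LinearOrder (Fin (n + 1))} (hE : M.E = Set.univ)
    {F : Set (Fin (n + 1))} {i : Fin (n + 1)} (hiF : i ∉ F) :
    i ∈ LSet M prec F ↔ i ∉ M.closure ({j | prec.lt i j} ∪ F) := by
  have hdiff : upSet prec i \ {i} = {j | prec.lt i j} := by
    ext j
    simp only [upSet, mem_diff, mem_setOf_eq, mem_singleton_iff]
    exact ⟨fun h => plt_of_ple_of_ne prec h.1 (fun e => h.2 e.symm),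
      fun h => ⟨ple_of_lt' prec h, fun e => pne_of_lt' prec h e.symm⟩⟩
  have hins : upSet prec i ∪ F = insert i ({j | prec.lt i j} ∪ F) := by
    rw [← hdiff, ← Set.insert_union, Set.insert_diff_singleton,
      Set.insert_eq_self.2 (show i ∈ upSet prec i from prec.le_refl i)]
  have hnot : i ∉ {j | prec.lt i j} ∪ F := by
    rintro (h | h)
    · exact plt_irrefl' prec i h
    · exact hiF h
  rw [LSet, mem_setOf_eq, or_iff_right hiF]
  show M.rk' ((upSet prec i \ {i}) ∪ F) < M.rk' (upSet prec i ∪ F) ↔ _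
  rw [hdiff, hins]
  exact rk'_lt_insert_iff hE hnot

/-- A set closed upwards under `prec`. -/
def UpClosed {n : ℕ} (prec : LinearOrder (Fin (n + 1))) (S : Set (Fin (n + 1))) : Prop :=
  ∀ a ∈ S, ∀ b, prec.lt a b → b ∈ S

lemma aux_indep {prec : LinearOrder (Fin (n + 1))} (hE : M.E = Set.univ)
    {F : Set (Fin (n + 1))} (hF : M.Indep F) :
    ∀ (m : ℕ) (S : Set (Fin (n + 1))), S.ncard ≤ m → UpClosed prec S →
      M.Indep ((LSet M prec F ∩ S) ∪ F) := by
  intro m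
  induction m with
  | zero =>
    intro S hS _
    have hSe : S = ∅ := (Set.ncard_eq_zero S.toFinite).1 (Nat.le_zero.1 hS)
    simpa [hSe] using hF
  | succ m ih =>
    intro S hS hup
    rcases S.eq_empty_or_nonempty with rfl | hne
    · simpa using hF
    obtain ⟨j, hjS, hjmin⟩ := pexists_min prec S.toFinite hne
    have hSins : S = insert j (S \ {j}) :=
      (Set.insert_diff_singleton.trans (Set.insert_eq_self.2 hjS)).symm
    have hSdiff : (S \ {j}).ncard ≤ m := by
      have := Set.ncard_diff_singleton_lt_of_mem hjS S.toFinite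
      omega
    have hupd : UpClosed prec (S \ {j}) := by
      rintro a ⟨haS, haj⟩ b hab
      refine ⟨hup a haS b hab, fun hbj => ?_⟩
      have hjb : prec.lt j b := plt_of_ple_of_plt prec (hjmin a haS) hab
      rw [hbj] at hjb
      exact plt_irrefl' prec j hjb
    have hsub : S \ {j} ⊆ {k | prec.lt j k} := by
      rintro a ⟨haS, haj⟩
      exact plt_of_ple_of_ne prec (hjmin a haS) (fun e => haj e.symm)
    have hXind := ih (S \ {j}) hSdiff hupd
    by_cases hjL : j ∈ LSet M prec F
    · have hset : (LSet M prec F ∩ S) ∪ F =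
          insert j ((LSet M prec F ∩ (S \ {j})) ∪ F) := by
        conv_lhs => rw [hSins]
        ext x
        simp only [mem_union, mem_inter_iff, mem_insert_iff, mem_diff, mem_singleton_iff]
        by_cases hxj : x = j
        · subst hxj
          simp [hjL]
          try tauto
        · simp only [hxj, false_or]
          try tauto
      by_cases hjF : j ∈ F
      · rw [hset, Set.insert_eq_self.2 (show j ∈ LSet M prec F ∩ (S \ {j}) ∪ F from Or.inr hjF)]
        exact hXind
      · have hjcl := (mem_LSet_iff hE hjF).1 hjL
        have hsub2 : (LSet M prec F ∩ (S \ {j})) ∪ F ⊆ {k | prec.lt j k} ∪ F :=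
          union_subset_union_left _ (inter_subset_right.trans hsub)
        have hjcl2 : j ∉ M.closure ((LSet M prec F ∩ (S \ {j})) ∪ F) :=
          fun h => hjcl (M.closure_subset_closure hsub2 h)
        have hjnot : j ∉ (LSet M prec F ∩ (S \ {j})) ∪ F := by
          rintro (⟨_, _, h⟩ | h)
          · exact h rfl
          · exact hjF h
        rw [hset, hXind.insert_indep_iff_of_notMem hjnot]
        exact ⟨by rw [hE]; trivial, hjcl2⟩
    · have hset : LSet M prec F ∩ S = LSet M prec F ∩ (S \ {j}) := by
        ext x
        constructor
        · rintro ⟨hxL, hxS⟩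
          exact ⟨hxL, hxS, fun h => hjL (h ▸ hxL)⟩
        · rintro ⟨hxL, hxS, _⟩
          exact ⟨hxL, hxS⟩
      rw [hset]
      exact hXind

lemma aux_span {prec : LinearOrder (Fin (n + 1))} (hE : M.E = Set.univ)
    {F : Set (Fin (n + 1))} :
    ∀ (m : ℕ) (S : Set (Fin (n + 1))), S.ncard ≤ m → UpClosed prec S →
      S ⊆ M.closure ((LSet M prec F ∩ S) ∪ F) := by
  intro m
  induction m with
  | zero =>
    intro S hS _
    have hSe : S = ∅ := (Set.ncard_eq_zero S.toFinite).1 (Nat.le_zero.1 hS)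
    simp [hSe]
  | succ m ih =>
    intro S hS hup
    rcases S.eq_empty_or_nonempty with rfl | hne
    · simp
    obtain ⟨j, hjS, hjmin⟩ := pexists_min prec S.toFinite hne
    have hSins : S = insert j (S \ {j}) :=
      (Set.insert_diff_singleton.trans (Set.insert_eq_self.2 hjS)).symm
    have hSdiff : (S \ {j}).ncard ≤ m := by
      have := Set.ncard_diff_singleton_lt_of_mem hjS S.toFinite
      omega
    have hupd : UpClosed prec (S \ {j}) := by
      rintro a ⟨haS, haj⟩ b hab
      refine ⟨hup a haS b hab, fun hbj => ?_⟩
      have hjb : prec.lt j b := plt_of_ple_of_plt prec (hjmin a haS) hab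
      rw [hbj] at hjb
      exact plt_irrefl' prec j hjb
    have key := ih (S \ {j}) hSdiff hupd
    have hmono : M.closure ((LSet M prec F ∩ (S \ {j})) ∪ F) ⊆
        M.closure ((LSet M prec F ∩ S) ∪ F) :=
      M.closure_subset_closure
        (union_subset_union_left _ (inter_subset_inter_right _ diff_subset))
    have hsubE : (LSet M prec F ∩ S) ∪ F ⊆ M.E := by rw [hE]; exact subset_univ _
    suffices hj : j ∈ M.closure ((LSet M prec F ∩ S) ∪ F) by
      conv_lhs => rw [hSins]
      exact insert_subset hj (key.trans hmono)
    by_cases hjL : j ∈ LSet M prec F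
    · exact M.mem_closure_of_mem (Or.inl ⟨hjL, hjS⟩) hsubE
    by_cases hjF : j ∈ F
    · exact M.mem_closure_of_mem (Or.inr hjF) hsubE
    have hjcl : j ∈ M.closure ({k | prec.lt j k} ∪ F) :=
      not_not.1 (fun hc => hjL ((mem_LSet_iff hE hjF).2 hc))
    have hstrictsub : {k | prec.lt j k} ⊆ S \ {j} := by
      intro a ha
      exact ⟨hup j hjS a ha, fun e => pne_of_lt' prec ha e.symm⟩
    have h2 : {k | prec.lt j k} ∪ F ⊆ M.closure ((LSet M prec F ∩ S) ∪ F) := by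
      apply union_subset
      · exact (hstrictsub.trans key).trans hmono
      · exact fun x hx => M.mem_closure_of_mem (Or.inr hx) hsubE
    exact M.closure_subset_closure_of_subset_closure h2 hjcl

end Helpers

/-- for every face `F` of the reduced no broken circuit complex of a simple
matroid of rank `r+1`, the set `L(F)` is a basis of `M` containing `F`, and it is the
`≺`-lexicographically maximal such basis. -/
theorem LSet_isLexMaxBasis {n r : ℕ} (M : Matroid (Fin (n + 1)))
    (prec : LinearOrder (Fin (n + 1)))
    (hE : M.E = Set.univ)
    (hsimple : ∀ e f : Fin (n + 1), e ≠ f → M.Indep {e, f})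
    (hloopless : ∀ e : Fin (n + 1), M.Indep {e})
    (hrank : ∀ B : Set (Fin (n + 1)), M.IsBase B → B.ncard = r + 1)
    (F : Set (Fin (n + 1))) (hF : RNBCface M F) :
    M.IsBase (LSet M prec F) ∧ F ⊆ LSet M prec F ∧
      ∀ B, M.IsBase B → F ⊆ B → B ≠ LSet M prec F →
        ∃ j ∈ LSet M prec F \ B, ∀ k ∈ B \ LSet M prec F, prec.lt k j := by
  obtain ⟨h0F, hBC, hFind⟩ := hF
  have hFL : F ⊆ LSet M prec F := fun i hi => Or.inl hi
  have hLuniv : (LSet M prec F ∩ Set.univ) ∪ F = LSet M prec F := by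
    rw [inter_univ]; exact union_eq_self_of_subset_right hFL
  have hupuniv : UpClosed prec Set.univ := fun _ _ _ _ => trivial
  have hind : M.Indep (LSet M prec F) := by
    have := aux_indep hE hFind (Set.univ : Set (Fin (n + 1))).ncard Set.univ le_rfl hupuniv
    rwa [hLuniv] at this
  have hspan : (Set.univ : Set (Fin (n + 1))) ⊆ M.closure (LSet M prec F) := by
    have := aux_span (prec := prec) (F := F) hE (Set.univ : Set (Fin (n + 1))).ncard Set.univ
      le_rfl hupuniv
    rwa [hLuniv] at this
  have hbase : M.IsBase (LSet M prec F) :=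
    hind.isBase_of_ground_subset_closure (by rw [hE]; exact hspan)
  refine ⟨hbase, hFL, ?_⟩
  intro B hB hFB hBL
  set D := (LSet M prec F \ B) ∪ (B \ LSet M prec F) with hD
  have hDne : D.Nonempty := by
    rw [Set.nonempty_iff_ne_empty]
    intro h
    rw [hD, Set.union_empty_iff, diff_eq_empty, diff_eq_empty] at h
    exact hBL (h.2.antisymm h.1)
  obtain ⟨j, hjD, hjmax⟩ := pexists_max prec D.toFinite hDne
  have hjLB : j ∈ LSet M prec F \ B := by
    rcases hjD with h | h
    · exact h
    exfalso
    have hjF : j ∉ F := fun hf => h.2 (hFL hf)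
    have hjcl : j ∈ M.closure ({k | prec.lt j k} ∪ F) :=
      not_not.1 (fun hc => h.2 ((mem_LSet_iff hE hjF).2 hc))
    have hagree : LSet M prec F ∩ {k | prec.lt j k} = B ∩ {k | prec.lt j k} := by
      ext x
      simp only [mem_inter_iff, mem_setOf_eq]
      constructor
      · rintro ⟨hxL, hxgt⟩
        refine ⟨?_, hxgt⟩
        by_contra hxB
        exact pnot_lt_of_le prec (hjmax x (Or.inl ⟨hxL, hxB⟩)) hxgt
      · rintro ⟨hxB, hxgt⟩
        refine ⟨?_, hxgt⟩
        by_contra hxL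
        exact pnot_lt_of_le prec (hjmax x (Or.inr ⟨hxB, hxL⟩)) hxgt
    have hupstrict : UpClosed prec {k | prec.lt j k} :=
      fun a ha b hab => plt_trans' prec ha hab
    have hstrict : {k | prec.lt j k} ⊆
        M.closure ((LSet M prec F ∩ {k | prec.lt j k}) ∪ F) :=
      aux_span hE _ _ le_rfl hupstrict
    have hsubB : (B ∩ {k | prec.lt j k}) ∪ F ⊆ B \ {j} := by
      apply union_subset
      · rintro x ⟨hxB, hxgt⟩
        exact ⟨hxB, fun hxj => plt_irrefl' prec j (hxj ▸ hxgt)⟩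
      · intro x hxF
        exact ⟨hFB hxF, fun hxj => hjF (hxj ▸ hxF)⟩
    have hBE : B \ {j} ⊆ M.E := by rw [hE]; exact subset_univ _
    have h1 : {k | prec.lt j k} ∪ F ⊆ M.closure (B \ {j}) := by
      apply union_subset
      · refine hstrict.trans ?_
        rw [hagree]
        exact M.closure_subset_closure hsubB
      · exact fun x hx => M.mem_closure_of_mem (hsubB (Or.inr hx)) hBE
    exact hB.indep.notMem_closure_sdiff_of_mem h.1
      (M.closure_subset_closure_of_subset_closure h1 hjcl)
  refine ⟨j, hjLB, ?_⟩
  intro k hk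
  exact plt_of_ple_of_ne prec (hjmax k (Or.inr hk)) (fun hkj => hjLB.2 (hkj ▸ hk.1))
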